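/- Let Z, X, A be finite sets, δ ∈ (0,1], T a positive integer, and R : X × A × Z → ℝ. Suppose the functions V_t : Z × X → ℝ (t = 1,...,T+1) satisfy V_{T+1} ≡ 0 and for each t, each z, each x: (a) V_t(z,x) = E^{γ̃_t(·|x)}[ R(x, A_t, z) + δ V_{t+1}(φ(z, γ̃_t), X_{t+1}) | z, x ] for the prescription γ̃_t = θ_t[z], and (b) for every alternative prescription component γ_t(·|x) ∈ P(A), V_t(z,x) ≥ E^{γ_t(·|x)}[ R(x, A_t, z) + δ V_{t+1}(φ(z, γ̃_t), X_{t+1}) | z, x ], where the expectation is over (X_t^{[1:N-1]}, A_t, X_{t+1}) with measure z(x^{[1:N-1]}) ∏_i γ(a^i|x^i) Q(x_{t+1} | z, x^{[1:N-1]}, x, a^{[1:N-1]}, a_t), and the mean-field trajectory is z_{n+1} = φ(z_n, γ̃_n). Then the strategy σ̃_t(a|z_{1:t}, x_{1:t}) = γ̃_t(a|x_t) satisfies: for all t, all histories (z_{1:t}, x_{1:t}) consistent with the trajectory, and all alternative strategies σ, E^{σ̃}[ Σ_{n=t}^T δ^{n-t} R(X_n, A_n, Z_n) | z_{1:t}, x_{1:t}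 ] ≥ E^{σ}[ Σ_{n=t}^T δ^{n-t} R(X_n, A_n, Z_n) | z_{1:t}, x_{1:t} ]. -/

import Mathlib

/-- Reward-to-go of a single (possibly deviating) player over `k` remaining stages,
starting at time `t` with private history `h` and current type `x`, when the mean-field
trajectory is `z`, the rest of the population uses prescriptions `γ` (entering the
single-player transition kernel `Tr`), and the player uses the history-dependent
behavioral strategy `σ`. -/
noncomputable def rtg {Z X A : Type*} [Fintype X] [Fintype A]
    (Tr : Z → (X → A → ℝ) → X → A → X → ℝ)
    (R : X → A → Z → ℝ) (δ : ℝ) (z : ℕ → Z) (γ : ℕ → X → A → ℝ)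
    (σ : ℕ → List X → A → ℝ) : ℕ → ℕ → List X → X → ℝ
  | 0, _, _, _ => 0
  | k + 1, t, h, x => ∑ a, σ t (h ++ [x]) a *
      (R x a (z t) + δ * ∑ x', Tr (z t) (γ t) x a x' *
        rtg Tr R δ z γ σ k (t + 1) (h ++ [x]) x')

/-- Theorem 2: if the value functions `V` and equilibrium generating
function `θ` solve the per-stage fixed-point equation (the prescription `θ t z` attains
the maximum while also driving the mean-field update `φ z (θ t z)`), then the induced
Markovian strategy σ̃_t(a | z_{1:t}, x_{1:t}) = θ t z_t (x_t) a dominates every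
history-dependent deviation σ in total expected discounted reward from any time and
history along the mean-field trajectory. -/
theorem finite_horizon_MFE_verification
    {Z X A : Type*} [Fintype X] [Fintype A] [Inhabited X] [Nonempty A]
    (Tr : Z → (X → A → ℝ) → X → A → X → ℝ)
    (hTr0 : ∀ z γ x a x', 0 ≤ Tr z γ x a x')
    (hTr1 : ∀ z γ x a, ∑ x', Tr z γ x a x' = 1)
    (R : X → A → Z → ℝ) (δ : ℝ) (hδ0 : 0 < δ) (hδ1 : δ ≤ 1) (T : ℕ)
    (φ : Z → (X → A → ℝ) → Z)
    (θ : ℕ → Z → X → A → ℝ)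
    (hθ0 : ∀ t z x a, 0 ≤ θ t z x a) (hθ1 : ∀ t z x, ∑ a, θ t z x a = 1)
    (V : ℕ → Z → X → ℝ)
    (hVT : ∀ z x, V (T + 1) z x = 0)
    (ha : ∀ t, 1 ≤ t → t ≤ T → ∀ z x,
      V t z x = ∑ a, θ t z x a * (R x a z +
        δ * ∑ x', Tr z (θ t z) x a x' * V (t + 1) (φ z (θ t z)) x'))
    (hb : ∀ t, 1 ≤ t → t ≤ T → ∀ z x (p : A → ℝ),
      (∀ a, 0 ≤ p a) → (∑ a, p a = 1) →
      (∑ a, p a * (R x a z +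
        δ * ∑ x', Tr z (θ t z) x a x' * V (t + 1) (φ z (θ t z)) x')) ≤ V t z x)
    (z : ℕ → Z) (hz : ∀ n, z (n + 1) = φ (z n) (θ n (z n)))
    (σ : ℕ → List X → A → ℝ)
    (hσ0 : ∀ t h a, 0 ≤ σ t h a) (hσ1 : ∀ t h, ∑ a, σ t h a = 1) :
    ∀ t, 1 ≤ t → t ≤ T → ∀ (h : List X) (x : X),
      rtg Tr R δ z (fun n => θ n (z n)) σ (T + 1 - t) t h x
        ≤ rtg Tr R δ z (fun n => θ n (z n))
            (fun n h a => θ n (z n) (h.getLastD default) a) (T + 1 - t) t h x := by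
  -- main induction: for all k, t with t + k = T + 1,
  -- (1) rtg with σ̃ equals V t (z t) x, (2) rtg with σ is ≤ V t (z t) x
  have getlast : ∀ (h : List X) (x : X), (h ++ [x]).getLastD default = x := by
    intro h x; simp
  have key : ∀ k t, t + k = T + 1 → 1 ≤ t → ∀ (h : List X) (x : X),
      (rtg Tr R δ z (fun n => θ n (z n))
        (fun n h a => θ n (z n) (h.getLastD default) a) k t h x = V t (z t) x)
      ∧ (rtg Tr R δ z (fun n => θ n (z n)) σ k t h x ≤ V t (z t) x) := by
    intro k
    induction k with
    | zero =>
      intro t ht _ h x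
      have : t = T + 1 := by omega
      subst this
      simp [rtg, hVT]
    | succ k ih =>
      intro t ht ht1 h x
      have htT : t ≤ T := by omega
      have hrec : t + 1 + k = T + 1 := by omega
      have ih' := fun h' x' => ih (t + 1) hrec (by omega) h' x'
      constructor
      · rw [rtg, ha t ht1 htT (z t) x]
        refine Finset.sum_congr rfl fun a _ => ?_
        rw [getlast]
        have inner : (∑ x', Tr (z t) (θ t (z t)) x a x' *
            rtg Tr R δ z (fun n => θ n (z n))
              (fun n h a => θ n (z n) (h.getLastD default) a) k (t + 1) (h ++ [x]) x')
            = ∑ x', Tr (z t) (θ t (z t)) x a x' *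
              V (t + 1) (φ (z t) (θ t (z t))) x' := by
          refine Finset.sum_congr rfl fun x' _ => ?_
          rw [(ih' (h ++ [x]) x').1, hz]
        rw [inner]
      · rw [rtg]
        have step : ∀ a, σ t (h ++ [x]) a *
            (R x a (z t) + δ * ∑ x', Tr (z t) (θ t (z t)) x a x' *
              rtg Tr R δ z (fun n => θ n (z n)) σ k (t + 1) (h ++ [x]) x')
            ≤ σ t (h ++ [x]) a *
            (R x a (z t) + δ * ∑ x', Tr (z t) (θ t (z t)) x a x' *
              V (t + 1) (φ (z t) (θ t (z t))) x') := by
          intro a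
          apply mul_le_mul_of_nonneg_left _ (hσ0 _ _ _)
          apply add_le_add_right
          apply mul_le_mul_of_nonneg_left _ hδ0.le
          apply Finset.sum_le_sum
          intro x' _
          apply mul_le_mul_of_nonneg_left _ (hTr0 _ _ _ _ _)
          rw [← hz]
          exact (ih' (h ++ [x]) x').2
        calc (∑ a, σ t (h ++ [x]) a *
            (R x a (z t) + δ * ∑ x', Tr (z t) (θ t (z t)) x a x' *
              rtg Tr R δ z (fun n => θ n (z n)) σ k (t + 1) (h ++ [x]) x'))
            ≤ ∑ a, σ t (h ++ [x]) a *
            (R x a (z t) + δ * ∑ x', Tr (z t) (θ t (z t)) x a x' *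
              V (t + 1) (φ (z t) (θ t (z t))) x') :=
              Finset.sum_le_sum fun a _ => step a
          _ ≤ V t (z t) x := hb t ht1 htT (z t) x _ (hσ0 _ _) (hσ1 _ _)
  intro t ht1 htT h x
  have hk : t + (T + 1 - t) = T + 1 := by omega
  calc rtg Tr R δ z (fun n => θ n (z n)) σ (T + 1 - t) t h x
      ≤ V t (z t) x := (key _ t hk ht1 h x).2
    _ = _ := ((key _ t hk ht1 h x).1).symm
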